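/- Let H be a complex Hilbert space decomposed as H = H₊ ⊕ H₋ ⊕ N(G) for a bounded selfadjoint operator G, where G restricted to H₊ is a positive definite operator G₊ and G restricted to H₋ is −G₋ with G₋ positive definite, and ‖G₊‖ = ‖G₋‖ = 1/κ. If ker(I − κG) = {0} (equivalently N₊ = {0}), then there is no pair (y, γ) with γ ∈ [−κ, κ], ⟨Gy, y⟩ = 0, and (I + γG)y equal to a nonzero vector of H₋. Equivalently: if there exist y ∈ Q(G) and γ ∈ [−κ, κ] with (I + γG)y ∈ H₋ \ {0}, then ker(I − κG) ≠ {0}. -/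

import Mathlib

open scoped InnerProductSpace

/-- Lemma 4.7 (one half): with the canonical decomposition `H = H₊ ⊕ H₋ ⊕ N(G)` of a
selfadjoint operator `G` (positive definite on `H₊`, negative definite on `H₋`, with
`‖G₊‖ = ‖G₋‖ = 1/κ`), if there exist `y ∈ Q(G)` and `γ ∈ [-κ, κ]` with
`(I + γG)y ∈ H₋ \ {0}`, then `N₊ = ker(I - κG) ≠ {0}`. -/
theorem boundary_kernel_nontrivial
    {H : Type*} [NormedAddCommGroup H] [InnerProductSpace ℂ H] [CompleteSpace H]
    (G : H →L[ℂ] H) (hG : IsSelfAdjoint G) (κ : ℝ) (hκ : 0 < κ)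
    (Hp Hm : Submodule ℂ H)
    (hpm : ∀ x ∈ Hp, ∀ y ∈ Hm, ⟪x, y⟫_ℂ = 0)
    (hp0 : ∀ x ∈ Hp, ∀ y ∈ LinearMap.ker (G : H →ₗ[ℂ] H), ⟪x, y⟫_ℂ = 0)
    (hm0 : ∀ x ∈ Hm, ∀ y ∈ LinearMap.ker (G : H →ₗ[ℂ] H), ⟪x, y⟫_ℂ = 0)
    (hspan : ∀ x : H, ∃ xp ∈ Hp, ∃ xm ∈ Hm, ∃ x0 ∈ LinearMap.ker (G : H →ₗ[ℂ] H), x = xp + xm + x0)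
    (hinvp : ∀ x ∈ Hp, G x ∈ Hp) (hinvm : ∀ x ∈ Hm, G x ∈ Hm)
    (hposp : ∃ α > 0, ∀ x ∈ Hp, α * ‖x‖ ^ 2 ≤ (⟪G x, x⟫_ℂ).re)
    (hnegm : ∃ β > 0, ∀ x ∈ Hm, (⟪G x, x⟫_ℂ).re ≤ -(β * ‖x‖ ^ 2))
    (hnormp : IsLUB {r : ℝ | ∃ x ∈ Hp, ‖x‖ = 1 ∧ r = ‖G x‖} (1 / κ))
    (hnormm : IsLUB {r : ℝ | ∃ x ∈ Hm, ‖x‖ = 1 ∧ r = ‖G x‖} (1 / κ))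
    (hex : ∃ y : H, ∃ γ ∈ Set.Icc (-κ) κ, ⟪G y, y⟫_ℂ = 0 ∧
      ((1 : H →L[ℂ] H) + (γ : ℂ) • G) y ∈ Hm ∧ ((1 : H →L[ℂ] H) + (γ : ℂ) • G) y ≠ 0) :
    LinearMap.ker (((1 : H →L[ℂ] H) - (κ : ℂ) • G : H →L[ℂ] H) : H →ₗ[ℂ] H) ≠ ⊥ := by
  obtain ⟨y, γ, hγ, hQ, hzm, hz0⟩ := hex
  obtain ⟨yp, hyp, ym, hym, y0, hy0, hdec⟩ := hspan y
  have hGy0 : G y0 = 0 := hy0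
  set a : H := yp + (γ : ℂ) • G yp with ha
  set b : H := ym + (γ : ℂ) • G ym with hb
  set z : H := ((1 : H →L[ℂ] H) + (γ : ℂ) • G) y with hzdef
  have hzeq : z = a + b + y0 := by
    simp only [hzdef, ContinuousLinearMap.add_apply, ContinuousLinearMap.smul_apply,
      ContinuousLinearMap.one_apply, hdec, map_add, hGy0, smul_add, ha, hb, add_zero,
      smul_zero]
  have haHp : a ∈ Hp := Hp.add_mem hyp (Hp.smul_mem _ (hinvp yp hyp))
  have hbHm : b ∈ Hm := Hm.add_mem hym (Hm.smul_mem _ (hinvm ym hym))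
  have hzb : z - b ∈ Hm := Hm.sub_mem hzm hbHm
  have hay0 : a + y0 = z - b := by rw [hzeq]; abel
  -- a = 0
  have ha0 : a = 0 := by
    have h1 : ⟪a, a + y0⟫_ℂ = 0 := hay0 ▸ hpm a haHp _ hzb
    rw [inner_add_right, hp0 a haHp y0 hy0, add_zero, inner_self_eq_zero] at h1
    exact h1
  -- y0 = 0
  have hy00 : y0 = 0 := by
    have h2 : y0 ∈ Hm := by
      have hzy : y0 = z - b := by rw [← hay0, ha0, zero_add]
      rw [hzy]; exact hzb
    have h3 := hm0 y0 h2 y0 hy0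
    rwa [inner_self_eq_zero] at h3
  have hy : y = yp + ym := by rw [hdec, hy00, add_zero]
  have hzb2 : z = b := by rw [hzeq, ha0, hy00, zero_add, add_zero]
  -- energy identity
  have hcross1 : ⟪G yp, ym⟫_ℂ = 0 := hpm _ (hinvp yp hyp) ym hym
  have hcross2 : ⟪G ym, yp⟫_ℂ = 0 := by
    have h := hpm yp hyp (G ym) (hinvm ym hym)
    rw [← inner_conj_symm, h, map_zero]
  have hsum : ⟪G yp, yp⟫_ℂ + ⟪G ym, ym⟫_ℂ = 0 := by
    have h := hQ
    rw [hy, map_add, inner_add_left, inner_add_right, inner_add_right, hcross1, hcross2] at h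
    linear_combination h
  -- ym ≠ 0
  have hym0 : ym ≠ 0 := by
    intro h
    apply hz0
    rw [hzb2, hb, h, map_zero, smul_zero, add_zero]
  obtain ⟨β, hβ, hβm⟩ := hnegm
  have hmneg : (⟪G ym, ym⟫_ℂ).re < 0 := by
    have h1 := hβm ym hym
    have h2 : 0 < ‖ym‖ := norm_pos_iff.mpr hym0
    have h3 : 0 < β * ‖ym‖ ^ 2 := by positivity
    linarith
  have hppos : 0 < (⟪G yp, yp⟫_ℂ).re := by
    have h := congrArg Complex.re hsum
    simp only [Complex.add_re, Complex.zero_re] at h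
    linarith
  have hyp0 : yp ≠ 0 := by
    intro h
    rw [h, map_zero, inner_zero_left] at hppos
    simp at hppos
  have hγne : γ ≠ 0 := by
    intro h
    apply hyp0
    have := ha0
    rw [ha, h] at this
    simpa using this
  have hγℂ : (γ : ℂ) ≠ 0 := Complex.ofReal_ne_zero.mpr hγne
  -- eigenvector equation
  have heig : G yp = (-(γ : ℂ)⁻¹) • yp := by
    have h1 : (γ : ℂ) • G yp = -yp := by
      have := ha0
      rw [ha] at this
      linear_combination (norm := module) this
    have h2 : G yp = (γ : ℂ)⁻¹ • ((γ : ℂ) • G yp) := by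
      rw [smul_smul, inv_mul_cancel₀ hγℂ, one_smul]
    rw [h2, h1, smul_neg, neg_smul]
  have hre : (⟪G yp, yp⟫_ℂ).re = -γ⁻¹ * ‖yp‖ ^ 2 := by
    rw [heig, inner_smul_left, inner_self_eq_norm_sq_to_K]
    have : (starRingEnd ℂ) (-(γ : ℂ)⁻¹) = ((-γ⁻¹ : ℝ) : ℂ) := by
      push_cast
      simp [map_neg, map_inv₀, Complex.conj_ofReal]
    rw [this]
    simp [Complex.mul_re, Complex.ofReal_re, Complex.ofReal_im]
    left
    norm_cast
  have hnp : 0 < ‖yp‖ := norm_pos_iff.mpr hyp0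
  have hγneg : γ < 0 := by
    by_contra h
    push_neg at h
    have hγpos : 0 < γ := lt_of_le_of_ne h (Ne.symm hγne)
    have : -γ⁻¹ * ‖yp‖ ^ 2 ≤ 0 := by
      have : 0 < γ⁻¹ := inv_pos.mpr hγpos
      nlinarith
    linarith [hre ▸ hppos]
  -- norm bound on Hp
  have hub : ‖G yp‖ ≤ ‖yp‖ / κ := by
    have hx : ((‖yp‖ : ℂ)⁻¹) • yp ∈ Hp := Hp.smul_mem _ hyp
    have hnx : ‖((‖yp‖ : ℂ)⁻¹) • yp‖ = 1 := by
      rw [norm_smul]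
      simp [abs_of_pos hnp, inv_mul_cancel₀ (ne_of_gt hnp)]
    have hmem : ‖yp‖⁻¹ * ‖G yp‖ ∈ {r : ℝ | ∃ x ∈ Hp, ‖x‖ = 1 ∧ r = ‖G x‖} := by
      refine ⟨_, hx, hnx, ?_⟩
      rw [map_smul, norm_smul]
      simp [abs_of_pos hnp]
    have hle := hnormp.1 hmem
    have h2 := mul_le_mul_of_nonneg_left hle hnp.le
    rw [← mul_assoc, mul_inv_cancel₀ hnp.ne', one_mul, mul_one_div] at h2
    exact h2
  have hGypnorm : ‖G yp‖ = (-γ)⁻¹ * ‖yp‖ := by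
    rw [heig, norm_smul]
    congr 1
    rw [norm_neg, norm_inv, Complex.norm_real, Real.norm_eq_abs, abs_of_neg hγneg, ← neg_inv]
  have hγκ : γ = -κ := by
    have h1 : (-γ)⁻¹ * ‖yp‖ ≤ ‖yp‖ / κ := hGypnorm ▸ hub
    have hmg : 0 < -γ := neg_pos.mpr hγneg
    have h2 : (-γ)⁻¹ ≤ κ⁻¹ := by
      rw [div_eq_mul_inv] at h1
      have := (mul_le_mul_iff_of_pos_right hnp).mp (by linarith [h1] : (-γ)⁻¹ * ‖yp‖ ≤ κ⁻¹ * ‖yp‖)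
      exact this
    have h3 : κ ≤ -γ := (inv_le_inv₀ hmg hκ).mp h2
    have h4 : -κ ≤ γ := hγ.1
    linarith
  -- conclude
  intro hbot
  apply hyp0
  have hker : yp ∈ LinearMap.ker (((1 : H →L[ℂ] H) - (κ : ℂ) • G : H →L[ℂ] H) : H →ₗ[ℂ] H) := by
    rw [LinearMap.mem_ker]
    show ((1 : H →L[ℂ] H) - (κ : ℂ) • G) yp = 0
    rw [ContinuousLinearMap.sub_apply, ContinuousLinearMap.smul_apply,
      ContinuousLinearMap.one_apply]
    have := ha0
    rw [ha, hγκ] at this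
    push_cast at this ⊢
    linear_combination (norm := module) this
  rw [hbot] at hker
  simpa using hker
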